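/- Let E(z), P(z) be differentiable families of bounded operators on H × K with E(z)P(z) = Id, where P(z) = [[A(z), R₋(z)],[R₊(z), 0]] and E(z) = [[E(z), E₊(z)],[E₋(z), E₋₊(z)]]. If A(z) = A₀ - z·Id (so ∂_z A = -Id) then E₋(z)E₊(z) = ∂_z E₋₊(z) + E₋₊(z) ∂_z R₊(z) E₊(z) + E₋(z) ∂_z R₋(z) E₋₊(z). -/

import Mathlib

set_option maxHeartbeats 1000000


private lemma clm_comp_real {F G H' : Type*}
    [NormedAddCommGroup F] [NormedSpace ℂ F]
    [NormedAddCommGroup G] [NormedSpace ℂ G]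
    [NormedAddCommGroup H'] [NormedSpace ℂ H']
    {c : ℝ → G →L[ℂ] H'} {c' : G →L[ℂ] H'}
    {d : ℝ → F →L[ℂ] G} {d' : F →L[ℂ] G} {x : ℝ}
    (hc : HasDerivAt c c' x) (hd : HasDerivAt d d' x) :
    HasDerivAt (fun y => (c y).comp (d y)) (c'.comp (d x) + (c x).comp d') x := by
  have B : IsBoundedBilinearMap ℝ
      (fun p : (G →L[ℂ] H') × (F →L[ℂ] G) => p.1.comp p.2) := by
    refine ⟨fun f g h => ContinuousLinearMap.add_comp _ _ _,
      fun r f g => ContinuousLinearMap.smul_comp r f g,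
      fun f g h => ContinuousLinearMap.comp_add _ _ _,
      fun r f g => ?_, ⟨1, one_pos, fun f g => by
        simpa using f.opNorm_comp_le g⟩⟩
    ext v
    simp
  have h1 := (B.hasFDerivAt (c x, d x)).comp x
    (HasFDerivAt.prodMk hc.hasFDerivAt hd.hasFDerivAt)
  have h2 := h1.hasDerivAt
  simpa [IsBoundedBilinearMap.deriv_apply, add_comm, Function.comp_def] using h2

/-- If moreover `A(z) = A₀ - z·Id` (so `∂_z A = -Id`), then
`E₋ E₊ = ∂_z E₋₊ + E₋₊ ∂_z R₊ E₊ + E₋ ∂_z R₋ E₋₊`. -/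
theorem stmt_5 {H K : Type*}
    [NormedAddCommGroup H] [InnerProductSpace ℂ H] [CompleteSpace H]
    [NormedAddCommGroup K] [InnerProductSpace ℂ K] [CompleteSpace K]
    (A₀ : H →L[ℂ] H)
    (A : ℝ → H →L[ℂ] H) (Rm : ℝ → K →L[ℂ] H) (Rp : ℝ → H →L[ℂ] K)
    (E : ℝ → H →L[ℂ] H) (Ep : ℝ → K →L[ℂ] H) (Em : ℝ → H →L[ℂ] K)
    (Emp : ℝ → K →L[ℂ] K)
    (hAform : ∀ z : ℝ, A z = A₀ - z • (1 : H →L[ℂ] H))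
    -- 𝓟(z) ∘ 𝓔(z) = Id for all z :
    (h1 : ∀ z, A z ∘L E z + Rm z ∘L Em z = 1)
    (h2 : ∀ z, A z ∘L Ep z + Rm z ∘L Emp z = 0)
    (h3 : ∀ z, Rp z ∘L E z = 0) (h4 : ∀ z, Rp z ∘L Ep z = 1)
    -- 𝓔(z) ∘ 𝓟(z) = Id for all z :
    (h5 : ∀ z, E z ∘L A z + Ep z ∘L Rp z = 1) (h6 : ∀ z, E z ∘L Rm z = 0)
    (h7 : ∀ z, Em z ∘L A z + Emp z ∘L Rp z = 0) (h8 : ∀ z, Em z ∘L Rm z = 1)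
    (z₀ : ℝ)
    (Rm' : K →L[ℂ] H) (Rp' : H →L[ℂ] K)
    (E' : H →L[ℂ] H) (Ep' : K →L[ℂ] H) (Em' : H →L[ℂ] K) (Emp' : K →L[ℂ] K)
    (hRm : HasDerivAt Rm Rm' z₀) (hRp : HasDerivAt Rp Rp' z₀)
    (hE : HasDerivAt E E' z₀) (hEp : HasDerivAt Ep Ep' z₀)
    (hEm : HasDerivAt Em Em' z₀) (hEmp : HasDerivAt Emp Emp' z₀) :
    Em z₀ ∘L Ep z₀ = Emp' + Emp z₀ ∘L Rp' ∘L Ep z₀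
        + Em z₀ ∘L Rm' ∘L Emp z₀ := by
  -- derivative of A
  have hA : HasDerivAt A (-(1 : H →L[ℂ] H)) z₀ := by
    have h : HasDerivAt (fun z : ℝ => A₀ - z • (1 : H →L[ℂ] H))
        (-(1 : H →L[ℂ] H)) z₀ := by
      simpa [Pi.sub_def] using (hasDerivAt_const z₀ A₀).sub
        ((hasDerivAt_id z₀).smul_const (1 : H →L[ℂ] H))
    exact h.congr_of_eventuallyEq (Filter.Eventually.of_forall fun z => hAform z)
  -- differentiate h7 : Em ∘ A + Emp ∘ Rp = 0
  have dEmA := clm_comp_real hEm hA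
  have dEmpRp := clm_comp_real hEmp hRp
  have D7 : Em' ∘L A z₀ + Em z₀ ∘L (-(1 : H →L[ℂ] H))
      + (Emp' ∘L Rp z₀ + Emp z₀ ∘L Rp') = 0 := by
    have hconst := dEmA.add dEmpRp
    have hzero : HasDerivAt (fun z => Em z ∘L A z + Emp z ∘L Rp z)
        (0 : H →L[ℂ] K) z₀ := by
      have he : (fun z => Em z ∘L A z + Emp z ∘L Rp z) = fun _ => (0 : H →L[ℂ] K) := by
        funext z; exact h7 z
      rw [he]; exact hasDerivAt_const z₀ 0
    exact hconst.unique hzero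
  -- differentiate h8 : Em ∘ Rm = 1
  have D8 : Em' ∘L Rm z₀ + Em z₀ ∘L Rm' = 0 := by
    have hconst := clm_comp_real hEm hRm
    have hzero : HasDerivAt (fun z => Em z ∘L Rm z) (0 : K →L[ℂ] K) z₀ := by
      have he : (fun z => Em z ∘L Rm z) = fun _ => (1 : K →L[ℂ] K) := by
        funext z; exact h8 z
      rw [he]; exact hasDerivAt_const z₀ 1
    exact hconst.unique hzero
  -- compose D7 on the right with Ep z₀
  have key := congrArg (fun T : H →L[ℂ] K => T ∘L Ep z₀) D7
  simp only [ContinuousLinearMap.add_comp, ContinuousLinearMap.comp_assoc,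
    ContinuousLinearMap.zero_comp] at key
  have hAEp : A z₀ ∘L Ep z₀ = -(Rm z₀ ∘L Emp z₀) :=
    eq_neg_of_add_eq_zero_left (h2 z₀)
  have hEmRm : Em' ∘L Rm z₀ = -(Em z₀ ∘L Rm') :=
    eq_neg_of_add_eq_zero_left D8
  rw [hAEp, h4 z₀] at key
  have key2 : -(Em' ∘L (Rm z₀ ∘L Emp z₀)) + -(Em z₀ ∘L Ep z₀)
      + (Emp' + Emp z₀ ∘L (Rp' ∘L Ep z₀)) = 0 := by
    simpa [ContinuousLinearMap.comp_neg, ContinuousLinearMap.comp_id, ContinuousLinearMap.one_def] using key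
  have h3' : Em' ∘L (Rm z₀ ∘L Emp z₀) = -(Em z₀ ∘L (Rm' ∘L Emp z₀)) := by
    rw [← ContinuousLinearMap.comp_assoc, hEmRm]
    simp [ContinuousLinearMap.comp_assoc]
  rw [h3', neg_neg] at key2
  -- key2 : Em∘(Rm'∘Emp) + -(Em∘Ep) + (Emp' + Emp∘(Rp'∘Ep)) = 0
  rw [← sub_eq_zero]
  calc Em z₀ ∘L Ep z₀ - (Emp' + Emp z₀ ∘L Rp' ∘L Ep z₀ + Em z₀ ∘L Rm' ∘L Emp z₀)
      = -(Em z₀ ∘L (Rm' ∘L Emp z₀) + -(Em z₀ ∘L Ep z₀)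
          + (Emp' + Emp z₀ ∘L (Rp' ∘L Ep z₀))) := by abel
    _ = 0 := by rw [key2, neg_zero]
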